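/- Let E be an n-element set and C ⊆ E a fixed m-element subset with 3 ≤ m ≤ n (E being the edge set of the uni-cyclic graph U_{n,m} and C the edge set of its cycle, so that the faces of Δ_s(U_{n,m}) are exactly the subsets of E not containing C). Then for every integer j ≥ 1, the number of functions a : E → ℕ with Σ_{e∈E} a(e) = j whose support {e : a(e) ≠ 0} is a face of Δ_s(U_{n,m}) (i.e., does not contain C) equals Σ_{i=0}^{m−2} C(n, i+1)·C(j−1, i) + Σ_{i=m−1}^{n−2} [C(n, i+1) − C(n−m, i−m+1)]·C(j−1, i). (This is the value at degree j of the Hilbert function of the Stanley–Reisner ring k[Δ_s(U_{n,m})], and is equivalent to the Hilbert series identity H(k[Δ_s(U_{n,m})], t) = Σ_{i=0}^{m−2} C(n,i+1) t^{i+1}/(1−t)^{i+1} + Σ_{i=m−1}^{n−2} [C(n,i+1) − C(n−m,i−m+1)] t^{i+1}/(1−t)^{i+1} + 1, since t^{i+1}/(1−t)^{i+1} = Σ_{j≥1} C(j−1, i) t^j.) -/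

import Mathlib

open Finset

lemma aux_card_piAntidiag {α : Type*} [DecidableEq α] (s : Finset α) (n : ℕ) :
    (Finset.piAntidiag s n).card = (s.card + n - 1).choose n := by
  rw [← Finset.map_sym_eq_piAntidiag, Finset.card_map]
  have h : s.sym n = (Finset.univ : Finset (Sym ↥s n)).map
      ⟨Sym.map (↑), Sym.map_injective Subtype.val_injective n⟩ := by
    ext m
    simp only [Finset.mem_map, Finset.mem_univ, true_and, Function.Embedding.coeFn_mk,
      Finset.mem_sym_iff]
    constructor
    · intro hm
      refine ⟨Sym.map (fun x => (⟨x.1, hm x.1 x.2⟩ : ↥s)) m.attach, ?_⟩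
      rw [Sym.map_map]
      exact (Sym.attach_map_coe m)
    · rintro ⟨w, rfl⟩ a ha
      obtain ⟨b, _, rfl⟩ := Sym.mem_map.1 ha
      exact b.2
  rw [h, Finset.card_map, Finset.card_univ, Sym.card_sym_eq_choose, Fintype.card_coe]
lemma aux_fiber_card {α : Type*} [Fintype α] [DecidableEq α] (j : ℕ) (hj : 1 ≤ j)
    (s : Finset α) :
    ((Finset.piAntidiag (univ : Finset α) j).filter
        (fun a => univ.filter (fun e => a e ≠ 0) = s)).card
      = if s = ∅ then 0 else (j - 1).choose (s.card - 1) := by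
  by_cases hs : s = ∅
  · simp only [hs, if_pos]
    rw [Finset.card_eq_zero, Finset.filter_eq_empty_iff]
    intro a ha
    rw [Finset.mem_piAntidiag] at ha
    intro hsupp
    have hz : ∀ e, a e = 0 := by
      intro e
      by_contra h
      have : e ∈ (∅ : Finset α) := by
        rw [← hsupp]; exact Finset.mem_filter.2 ⟨Finset.mem_univ e, h⟩
      simp at this
    have h0 : univ.sum a = 0 := Finset.sum_eq_zero fun e _ => hz e
    omega
  · rw [if_neg hs]
    have hk1 : 1 ≤ s.card := Finset.card_pos.2 (Finset.nonempty_iff_ne_empty.2 hs)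
    by_cases hjk : j < s.card
    · rw [Nat.choose_eq_zero_of_lt (by omega), Finset.card_eq_zero,
        Finset.filter_eq_empty_iff]
      intro a ha
      rw [Finset.mem_piAntidiag] at ha
      intro hsupp
      have hle : s.card ≤ s.sum a := by
        calc s.card = ∑ _e ∈ s, 1 := by simp
        _ ≤ s.sum a := Finset.sum_le_sum (fun e he => by
            have he2 : e ∈ univ.filter (fun e => a e ≠ 0) := by rw [hsupp]; exact he
            have : a e ≠ 0 := (Finset.mem_filter.1 he2).2
            omega)
      have hle2 : s.sum a ≤ univ.sum a :=
        Finset.sum_le_sum_of_subset (Finset.subset_univ s)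
      omega
    · push_neg at hjk
      have key : ((Finset.piAntidiag (univ : Finset α) j).filter
          (fun a => univ.filter (fun e => a e ≠ 0) = s)).card
          = (Finset.piAntidiag s (j - s.card)).card := by
        refine Finset.card_bij' (fun a _ => fun e => a e - (if e ∈ s then 1 else 0))
          (fun b _ => fun e => b e + (if e ∈ s then 1 else 0)) ?_ ?_ ?_ ?_
        · intro a ha
          rw [Finset.mem_filter, Finset.mem_piAntidiag] at ha
          obtain ⟨⟨hsum, -⟩, hsupp⟩ := ha
          have hmem : ∀ e, (a e ≠ 0 ↔ e ∈ s) := by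
            intro e; rw [← hsupp]; simp
          rw [Finset.mem_piAntidiag]
          constructor
          · show (∑ e ∈ s, (a e - if e ∈ s then 1 else 0)) = j - s.card
            have h1 : (∑ e ∈ s, (a e - if e ∈ s then 1 else 0))
                = ∑ e ∈ s, (a e - 1) :=
              Finset.sum_congr rfl fun e he => by rw [if_pos he]
            have h2 : s.sum a = (∑ e ∈ s, (a e - 1)) + s.card := by
              rw [Finset.card_eq_sum_ones s, ← Finset.sum_add_distrib]
              apply Finset.sum_congr rfl
              intro e he
              have := (hmem e).2 he
              omega
            have h3 : s.sum a = univ.sum a :=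
              Finset.sum_subset (Finset.subset_univ s) (fun e _ hes => by
                by_contra h
                exact hes ((hmem e).1 h))
            omega
          · intro i hi
            replace hi : a i - (if i ∈ s then 1 else 0) ≠ 0 := hi
            by_contra his
            rw [if_neg his] at hi
            have : a i = 0 := by
              by_contra h
              exact his ((hmem i).1 h)
            omega
        · intro b hb
          rw [Finset.mem_piAntidiag] at hb
          obtain ⟨hsum, hsupp⟩ := hb
          rw [Finset.mem_filter, Finset.mem_piAntidiag]
          refine ⟨⟨?_, fun i _ => Finset.mem_univ i⟩, ?_⟩
          · show (∑ e ∈ univ, (b e + if e ∈ s then 1 else 0)) = j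
            have h0 : ∀ e ∈ (univ : Finset α), e ∉ s → b e + (if e ∈ s then 1 else 0) = 0 := by
              intro e _ hes
              rw [if_neg hes]
              by_contra h
              exact hes (hsupp e (by omega))
            have h1 : (∑ e ∈ univ, (b e + if e ∈ s then 1 else 0))
                = ∑ e ∈ s, (b e + if e ∈ s then 1 else 0) :=
              (Finset.sum_subset (Finset.subset_univ s) h0).symm
            have h2 : (∑ e ∈ s, (b e + if e ∈ s then 1 else 0))
                = (∑ e ∈ s, b e) + ∑ e ∈ s, (if e ∈ s then 1 else 0) :=
              Finset.sum_add_distrib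
            have h3 : (∑ e ∈ s, (if e ∈ s then 1 else 0)) = s.card := by
              rw [Finset.sum_ite_mem, Finset.inter_self]
              simp
            have h4 : (∑ e ∈ s, b e) = j - s.card := hsum
            omega
          · ext e
            simp only [Finset.mem_filter, Finset.mem_univ, true_and]
            show (b e + if e ∈ s then 1 else 0) ≠ 0 ↔ e ∈ s
            constructor
            · intro h
              by_contra hes
              rw [if_neg hes] at h
              exact hes (hsupp e h)
            · intro h
              rw [if_pos h]
              omega
        · intro a ha
          have hsupp : univ.filter (fun e => a e ≠ 0) = s := (Finset.mem_filter.1 ha).2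
          funext e
          show a e - (if e ∈ s then 1 else 0) + (if e ∈ s then 1 else 0) = a e
          by_cases hes : e ∈ s
          · have he : e ∈ univ.filter (fun e => a e ≠ 0) := by rw [hsupp]; exact hes
            have hae : a e ≠ 0 := (Finset.mem_filter.1 he).2
            rw [if_pos hes]
            omega
          · have hae : a e = 0 := by
              by_contra h
              exact hes (by rw [← hsupp]; exact Finset.mem_filter.2 ⟨Finset.mem_univ e, h⟩)
            rw [if_neg hes, hae]
        · intro b hb
          funext e
          show b e + (if e ∈ s then 1 else 0) - (if e ∈ s then 1 else 0) = b e
          omega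
      rw [key, aux_card_piAntidiag]
      clear key
      have h1 : s.card + (j - s.card) - 1 = j - 1 := by omega
      rw [h1]
      rw [← Nat.choose_symm (by omega : j - s.card ≤ j - 1)]
      congr 1
      omega

lemma aux_card_supersets {α : Type*} [Fintype α] [DecidableEq α] (C : Finset α) (k : ℕ)
    (hk : C.card ≤ k) :
    (((univ : Finset α).powersetCard k).filter (fun s => C ⊆ s)).card
      = (Fintype.card α - C.card).choose (k - C.card) := by
  have h : (((univ : Finset α).powersetCard k).filter (fun s => C ⊆ s)).card
      = (Cᶜ.powersetCard (k - C.card)).card := by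
    refine (Finset.card_bij' (fun t _ => t ∪ C) (fun s _ => s \ C) ?_ ?_ ?_ ?_).symm
    · intro t ht
      rw [Finset.mem_powersetCard] at ht
      obtain ⟨hsub, hcard⟩ := ht
      have hdisj : Disjoint t C := by
        rw [Finset.disjoint_left]
        intro x hx hxC
        have := hsub hx
        simp [hxC] at this
      rw [Finset.mem_filter, Finset.mem_powersetCard]
      refine ⟨⟨Finset.subset_univ _, ?_⟩, Finset.subset_union_right⟩
      rw [Finset.card_union_of_disjoint hdisj, hcard]
      omega
    · intro s hs
      rw [Finset.mem_filter, Finset.mem_powersetCard] at hs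
      obtain ⟨⟨-, hcard⟩, hCs⟩ := hs
      rw [Finset.mem_powersetCard]
      constructor
      · intro x hx
        rw [Finset.mem_sdiff] at hx
        simpa using hx.2
      · rw [Finset.card_sdiff_of_subset hCs, hcard]
    · intro t ht
      rw [Finset.mem_powersetCard] at ht
      have hdisj : Disjoint t C := by
        rw [Finset.disjoint_left]
        intro x hx hxC
        have := ht.1 hx
        simp [hxC] at this
      show (t ∪ C) \ C = t
      rw [Finset.union_sdiff_right]
      exact Finset.sdiff_eq_self_of_disjoint hdisj
    · intro s hs
      rw [Finset.mem_filter] at hs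
      show s \ C ∪ C = s
      exact Finset.sdiff_union_of_subset hs.2
  rw [h, Finset.card_powersetCard, Finset.card_compl]

/-- **Hilbert function of the Stanley–Reisner ring `k[Δ_s(U_{n,m})]`.**
Let `E` be an `n`-element set and `C ⊆ E` an `m`-element subset (`3 ≤ m ≤ n`),
so that the faces of `Δ_s(U_{n,m})` are exactly the subsets of `E` not
containing `C`. Then for every `j ≥ 1`, the number of monomials of total degree
`j` in variables indexed by `E` whose support is a face (i.e. the number of
functions `a : E → ℕ` with `∑ a e = j` whose support does not contain `C`)
equals
`∑_{i=0}^{m-2} C(n, i+1)·C(j-1, i)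
  + ∑_{i=m-1}^{n-2} [C(n, i+1) − C(n−m, i+1−m)]·C(j−1, i)`.
This is the degree-`j` coefficient of the Hilbert series
`H(k[Δ_s(U_{n,m})], t) = 1 + ∑ᵢ fᵢ tⁱ⁺¹/(1−t)ⁱ⁺¹`. -/
theorem hilbert_function_of_unicyclic
    {α : Type*} [Fintype α] [DecidableEq α] (n m j : ℕ)
    (hm3 : 3 ≤ m) (hmn : m ≤ n) (hj : 1 ≤ j)
    (hcard : Fintype.card α = n)
    (C : Finset α) (hC : C.card = m) :
    {a : α → ℕ | (∑ e, a e) = j ∧ ¬ ((C : Set α) ⊆ Function.support a)}.ncard =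
      (∑ i ∈ Finset.range (m - 1), n.choose (i + 1) * (j - 1).choose i) +
      (∑ i ∈ Finset.Icc (m - 1) (n - 2),
        (n.choose (i + 1) - (n - m).choose (i + 1 - m)) * (j - 1).choose i) := by
  classical
  -- Step A: the set is a finset
  have hset : {a : α → ℕ | (∑ e, a e) = j ∧ ¬ ((C : Set α) ⊆ Function.support a)}
      = ↑((Finset.piAntidiag (univ : Finset α) j).filter
          (fun a => ¬ C ⊆ univ.filter (fun e => a e ≠ 0))) := by
    ext a
    constructor
    · rintro ⟨h1, h2⟩
      rw [Finset.mem_coe, Finset.mem_filter, Finset.mem_piAntidiag]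
      refine ⟨⟨h1, fun i _ => Finset.mem_univ i⟩, fun hsub => h2 ?_⟩
      intro x hx
      have hxC : x ∈ C := hx
      exact (Finset.mem_filter.1 (hsub hxC)).2
    · intro h
      rw [Finset.mem_coe, Finset.mem_filter, Finset.mem_piAntidiag] at h
      obtain ⟨⟨h1, -⟩, h2⟩ := h
      refine ⟨h1, fun hsub => h2 ?_⟩
      intro x hx
      exact Finset.mem_filter.2 ⟨Finset.mem_univ x, hsub hx⟩
  rw [hset, Set.ncard_coe_finset]
  -- Step B: fiberwise count over supports
  have hmap : ∀ a ∈ (Finset.piAntidiag (univ : Finset α) j).filter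
      (fun a => ¬ C ⊆ univ.filter (fun e => a e ≠ 0)),
      univ.filter (fun e => a e ≠ 0)
        ∈ (univ : Finset α).powerset.filter (fun s => ¬ C ⊆ s) := by
    intro a ha
    rw [Finset.mem_filter] at ha ⊢
    exact ⟨Finset.mem_powerset.2 (Finset.filter_subset _ _), ha.2⟩
  rw [Finset.card_eq_sum_card_fiberwise hmap]
  -- Step C: each fiber
  have hfib : ∀ s ∈ (univ : Finset α).powerset.filter (fun s => ¬ C ⊆ s),
      (((Finset.piAntidiag (univ : Finset α) j).filter
        (fun a => ¬ C ⊆ univ.filter (fun e => a e ≠ 0))).filter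
          (fun a => univ.filter (fun e => a e ≠ 0) = s)).card
      = if s = ∅ then 0 else (j - 1).choose (s.card - 1) := by
    intro s hsT
    rw [Finset.mem_filter] at hsT
    rw [← aux_fiber_card j hj s]
    congr 1
    ext a
    simp only [Finset.mem_filter, and_assoc]
    constructor
    · rintro ⟨h1, -, h3⟩
      exact ⟨h1, h3⟩
    · rintro ⟨h1, h3⟩
      refine ⟨h1, ?_, h3⟩
      rw [h3]
      exact hsT.2
  rw [Finset.sum_congr rfl hfib]
  -- Step D: group by cardinality
  have hmap2 : ∀ s ∈ (univ : Finset α).powerset.filter (fun s => ¬ C ⊆ s),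
      s.card ∈ Finset.range (n + 1) := by
    intro s hs
    rw [Finset.mem_filter, Finset.mem_powerset] at hs
    rw [Finset.mem_range]
    have := Finset.card_le_card hs.1
    rw [Finset.card_univ, hcard] at this
    omega
  have hgrp := Finset.sum_fiberwise_of_maps_to' hmap2
    (fun k => if k = 0 then 0 else (j - 1).choose (k - 1))
  have hFs : ∀ s ∈ (univ : Finset α).powerset.filter (fun s => ¬ C ⊆ s),
      (if s = ∅ then 0 else (j - 1).choose (s.card - 1))
      = (fun k => if k = 0 then 0 else (j - 1).choose (k - 1)) s.card := by
    intro s _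
    by_cases hs : s = ∅
    · simp [hs]
    · have hc : s.card ≠ 0 := by rwa [ne_eq, Finset.card_eq_zero]
      simp [hs, hc]
  rw [Finset.sum_congr rfl hFs, ← hgrp]
  -- Step E: compute each fiber of the grouping
  have hN : ∀ k, (((univ : Finset α).powerset.filter (fun s => ¬ C ⊆ s)).filter
      (fun s => s.card = k)).card
      = n.choose k - (if m ≤ k then (n - m).choose (k - m) else 0) := by
    intro k
    have he : ((univ : Finset α).powerset.filter (fun s => ¬ C ⊆ s)).filter
        (fun s => s.card = k)
        = ((univ : Finset α).powersetCard k).filter (fun s => ¬ C ⊆ s) := by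
      ext s
      simp only [Finset.mem_filter, Finset.mem_powerset, Finset.mem_powersetCard]
      tauto
    rw [he]
    have hsplit := Finset.card_filter_add_card_filter_not
      (s := (univ : Finset α).powersetCard k) (p := fun s => C ⊆ s)
    have htot : ((univ : Finset α).powersetCard k).card = n.choose k := by
      rw [Finset.card_powersetCard, Finset.card_univ, hcard]
    by_cases hmk : m ≤ k
    · rw [if_pos hmk]
      have := aux_card_supersets C k (by omega)
      rw [hC, hcard] at this
      omega
    · rw [if_neg hmk]
      have hzero : (((univ : Finset α).powersetCard k).filter (fun s => C ⊆ s)).card = 0 := by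
        rw [Finset.card_eq_zero, Finset.filter_eq_empty_iff]
        intro s hs hCs
        rw [Finset.mem_powersetCard] at hs
        have := Finset.card_le_card hCs
        omega
      omega
  -- Step F: final arithmetic
  have hsum : ∀ k ∈ Finset.range (n + 1),
      (∑ s ∈ ((univ : Finset α).powerset.filter (fun s => ¬ C ⊆ s)).filter
        (fun s => s.card = k), (if k = 0 then 0 else (j - 1).choose (k - 1)))
      = (n.choose k - (if m ≤ k then (n - m).choose (k - m) else 0)) *
          (if k = 0 then 0 else (j - 1).choose (k - 1)) := by
    intro k _
    rw [Finset.sum_const, hN k, smul_eq_mul]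
  rw [Finset.sum_congr rfl hsum]
  -- now pure arithmetic over k
  rw [Finset.sum_range_succ']
  simp only [if_pos rfl, mul_zero, add_zero]
  have hterm : ∀ i, (n.choose (i + 1) - (if m ≤ i + 1 then (n - m).choose (i + 1 - m) else 0)) *
      (if i + 1 = 0 then 0 else (j - 1).choose (i + 1 - 1))
      = (n.choose (i + 1) - (if m ≤ i + 1 then (n - m).choose (i + 1 - m) else 0)) *
        (j - 1).choose i := by
    intro i
    rw [if_neg (Nat.succ_ne_zero i), Nat.add_sub_cancel]
  simp only [hterm]
  have esplit : (∑ i ∈ Finset.Ico 0 (m - 1),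
      (n.choose (i + 1) - if m ≤ i + 1 then (n - m).choose (i + 1 - m) else 0) *
        (j - 1).choose i)
      + (∑ i ∈ Finset.Ico (m - 1) n,
      (n.choose (i + 1) - if m ≤ i + 1 then (n - m).choose (i + 1 - m) else 0) *
        (j - 1).choose i)
      = ∑ i ∈ Finset.Ico 0 n,
      (n.choose (i + 1) - if m ≤ i + 1 then (n - m).choose (i + 1 - m) else 0) *
        (j - 1).choose i :=
    Finset.sum_Ico_consecutive _ (by omega) (by omega)
  rw [Finset.range_eq_Ico, ← esplit]
  have e1 : (∑ i ∈ Finset.Ico 0 (m - 1),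
      (n.choose (i + 1) - if m ≤ i + 1 then (n - m).choose (i + 1 - m) else 0) *
        (j - 1).choose i)
      = ∑ i ∈ Finset.range (m - 1), n.choose (i + 1) * (j - 1).choose i := by
    rw [← Finset.range_eq_Ico]
    apply Finset.sum_congr rfl
    intro i hi
    rw [Finset.mem_range] at hi
    rw [if_neg (by omega), Nat.sub_zero]
  have e2 : (∑ i ∈ Finset.Ico (m - 1) n,
      (n.choose (i + 1) - if m ≤ i + 1 then (n - m).choose (i + 1 - m) else 0) *
        (j - 1).choose i)
      = ∑ i ∈ Finset.Icc (m - 1) (n - 2),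
        (n.choose (i + 1) - (n - m).choose (i + 1 - m)) * (j - 1).choose i := by
    have hI : Finset.Ico (m - 1) n = Finset.Ico (m - 1) ((n - 1) + 1) := by
      congr 1
      omega
    rw [hI, Finset.sum_Ico_succ_top (by omega : m - 1 ≤ n - 1)]
    have h1 : n - 1 + 1 = n := by omega
    have hlast : (n.choose ((n - 1) + 1) -
        if m ≤ (n - 1) + 1 then (n - m).choose ((n - 1) + 1 - m) else 0) *
        (j - 1).choose (n - 1) = 0 := by
      rw [h1, if_pos (by omega : m ≤ n), Nat.choose_self, Nat.choose_self]
      simp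
    rw [hlast, add_zero]
    have hI2 : Finset.Icc (m - 1) (n - 2) = Finset.Ico (m - 1) (n - 1) := by
      rw [← Finset.Ico_add_one_right_eq_Icc]
      congr 1
      omega
    rw [hI2]
    apply Finset.sum_congr rfl
    intro i hi
    rw [Finset.mem_Ico] at hi
    rw [if_pos (by omega)]
  rw [e1, e2]
  simp
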